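/- For every positive integer n, sum over k from 0 to n-1 of (-1)^k binomial(n,k) phi_k(x) equals sum over k from 1 to n of (-1)^(k-1) binomial(n,k) phi_k'(x), where phi_n is the exponential polynomial and phi_n' its derivative. -/

import Mathlib

open Finset Polynomial

/-- Stirling numbers of the second kind. -/
def S : ℕ → ℕ → ℕ
  | 0, 0 => 1
  | 0, _ + 1 => 0
  | _ + 1, 0 => 0
  | n + 1, k + 1 => (k + 1) * S n (k + 1) + S n k

lemma S_eq_zero : ∀ {n k : ℕ}, n < k → S n k = 0
  | 0, _ + 1, _ => rfl
  | n + 1, k + 1, h => by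
    show (k + 1) * S n (k + 1) + S n k = 0
    rw [S_eq_zero (by omega : n < k + 1), S_eq_zero (by omega : n < k)]
    simp
  | n + 1, 0, h => by omega

/-- Exponential (Bell) polynomials. -/
noncomputable def phi (n : ℕ) : Polynomial ℤ :=
  ∑ k ∈ range (n + 1), Polynomial.C (S n k : ℤ) * Polynomial.X ^ k

lemma coeff_phi (n j : ℕ) : (phi n).coeff j = (S n j : ℤ) := by
  rw [phi, Polynomial.finset_sum_coeff]
  simp only [Polynomial.coeff_C_mul, Polynomial.coeff_X_pow, mul_ite, mul_one, mul_zero]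
  rw [Finset.sum_ite_eq (range (n + 1)) j (fun k => (S n k : ℤ))]
  split_ifs with h
  · rfl
  · rw [S_eq_zero (by simpa using h)]; rfl

lemma sum_choose_S (n j : ℕ) :
    ∑ k ∈ range (n + 1), n.choose k * S k j = S (n + 1) (j + 1) := by
  induction n generalizing j with
  | zero =>
    cases j <;> simp [S]
  | succ n ih =>
    have hsec : ∑ k ∈ range (n + 1), n.choose (k + 1) * S (k + 1) j + S 0 j
        = S (n + 1) (j + 1) := by
      have h2 : ∑ k ∈ range (n + 2), n.choose k * S k j = S (n + 1) (j + 1) := by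
        rw [Finset.sum_range_succ, ih j, Nat.choose_succ_self]
        simp
      rw [← h2]
      conv_rhs => rw [Finset.sum_range_succ']
      simp
    rw [Finset.sum_range_succ']
    simp only [Nat.choose_succ_succ, Nat.choose_zero_right, one_mul, add_mul]
    rw [Finset.sum_add_distrib, add_assoc, hsec]
    cases j with
    | zero =>
      have hz : ∀ k, S (k + 1) 0 = 0 := fun _ => rfl
      have h3 : S (n + 1 + 1) 1 = 1 * S (n + 1) 1 + S (n + 1) 0 := rfl
      have h4 : S (n + 1) 0 = 0 := rfl
      have h5 : S 0 0 = 1 := rfl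
      simp only [hz, Nat.mul_zero, Finset.sum_const_zero, Nat.zero_add, zero_add]
      omega
    | succ j =>
      have hrec : ∀ k, S (k + 1) (j + 1) = (j + 1) * S k (j + 1) + S k j := fun _ => rfl
      have hsum : ∑ x ∈ range (n + 1), n.choose x * ((j + 1) * S x (j + 1) + S x j)
          = (j + 1) * (∑ x ∈ range (n + 1), n.choose x * S x (j + 1)) +
            ∑ x ∈ range (n + 1), n.choose x * S x j := by
        rw [Finset.mul_sum, ← Finset.sum_add_distrib]
        exact Finset.sum_congr rfl fun x _ => by ring
      simp only [hrec]
      rw [hsum, ih j, ih (j + 1)]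
      have h3 : S (n + 1 + 1) (j + 1 + 1) =
          (j + 1 + 1) * S (n + 1) (j + 1 + 1) + S (n + 1) (j + 1) := rfl
      rw [h3]
      ring

lemma derivative_phi (n : ℕ) :
    Polynomial.derivative (phi n) = ∑ k ∈ range n, Polynomial.C (n.choose k : ℤ) * phi k := by
  ext j
  rw [Polynomial.coeff_derivative, coeff_phi, Polynomial.finset_sum_coeff]
  simp only [Polynomial.coeff_C_mul, coeff_phi]
  have key2 : ∑ k ∈ range n, n.choose k * S k j = (j + 1) * S n (j + 1) := by
    have key := sum_choose_S n j
    rw [Finset.sum_range_succ, Nat.choose_self, one_mul] at key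
    have hrec : S (n + 1) (j + 1) = (j + 1) * S n (j + 1) + S n j := rfl
    omega
  have hcast := congrArg (fun m : ℕ => (m : ℤ)) key2
  push_cast at hcast ⊢
  rw [hcast]
  ring

lemma innerAux (n j : ℕ) (hj : j < n) :
    ∑ k ∈ Finset.Ico (j + 1) (n + 1),
      (-1 : ℤ) ^ (k - 1) * ((n.choose k : ℤ) * (k.choose j : ℤ)) =
      (-1 : ℤ) ^ j * (n.choose j : ℤ) := by
  have hre : ∀ k ∈ Finset.Ico (j + 1) (n + 1),
      (-1 : ℤ) ^ (k - 1) * ((n.choose k : ℤ) * (k.choose j : ℤ)) =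
      (-1 : ℤ) ^ (k - 1) * ((n.choose j : ℤ) * ((n - j).choose (k - j) : ℤ)) := by
    intro k hk
    rw [Finset.mem_Ico] at hk
    rw [← Nat.cast_mul, Nat.choose_mul (by omega), Nat.cast_mul]
  rw [Finset.sum_congr rfl hre, Finset.sum_Ico_eq_sum_range]
  have hN : n + 1 - (j + 1) = n - j := by omega
  rw [hN]
  have hterm : ∀ m ∈ range (n - j),
      (-1 : ℤ) ^ (j + 1 + m - 1) * ((n.choose j : ℤ) * ((n - j).choose (j + 1 + m - j) : ℤ)) =
      ((-1 : ℤ) ^ j * (n.choose j : ℤ)) * ((-1 : ℤ) ^ m * ((n - j).choose (m + 1) : ℤ)) := by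
    intro m _
    have h1 : j + 1 + m - 1 = j + m := by omega
    have h2 : j + 1 + m - j = m + 1 := by omega
    rw [h1, h2, pow_add]
    ring
  rw [Finset.sum_congr rfl hterm, ← Finset.mul_sum]
  have h0 : n - j ≠ 0 := by omega
  have halt0 := Int.alternating_sum_range_choose_of_ne h0
  rw [Finset.sum_range_succ'] at halt0
  simp only [pow_zero, one_mul, Nat.choose_zero_right, Nat.cast_one] at halt0
  have hneg : ∑ i ∈ range (n - j), (-1 : ℤ) ^ (i + 1) * ((n - j).choose (i + 1) : ℤ) =
      -∑ i ∈ range (n - j), (-1 : ℤ) ^ i * ((n - j).choose (i + 1) : ℤ) := by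
    rw [← Finset.sum_neg_distrib]
    exact Finset.sum_congr rfl fun i _ => by ring
  rw [hneg] at halt0
  have hone : ∑ i ∈ range (n - j), (-1 : ℤ) ^ i * ((n - j).choose (i + 1) : ℤ) = 1 := by omega
  rw [hone, mul_one]

theorem stmt7 (n : ℕ) (hn : 0 < n) :
    ∑ k ∈ range n, Polynomial.C ((-1 : ℤ) ^ k * n.choose k) * phi k =
      ∑ k ∈ Icc 1 n, Polynomial.C ((-1 : ℤ) ^ (k - 1) * n.choose k) *
        Polynomial.derivative (phi k) := by
  set G : ℕ → ℕ → Polynomial ℤ := fun k j =>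
    Polynomial.C ((-1 : ℤ) ^ (k - 1) * n.choose k) * (Polynomial.C (k.choose j : ℤ) * phi j)
    with hG
  have expand : ∀ k, Polynomial.C ((-1 : ℤ) ^ (k - 1) * n.choose k) *
      Polynomial.derivative (phi k) = ∑ j ∈ Finset.Ico 0 k, G k j := by
    intro k
    rw [derivative_phi, Finset.mul_sum, Finset.range_eq_Ico]
  have main2 : ∑ k ∈ Finset.Ico 0 (n + 1), ∑ j ∈ Finset.Ico 0 k, G k j =
      ∑ k ∈ Icc 1 n, Polynomial.C ((-1 : ℤ) ^ (k - 1) * n.choose k) *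
        Polynomial.derivative (phi k) := by
    rw [Finset.sum_eq_sum_Ico_succ_bot (Nat.succ_pos n)]
    simp only [Finset.Ico_self, Finset.sum_empty, zero_add]
    rw [← Finset.Ico_add_one_right_eq_Icc]
    exact Finset.sum_congr rfl fun k _ => (expand k).symm
  rw [← main2, ← Finset.sum_Ico_Ico_comm' 0 (n + 1) (fun j k => G k j)]
  rw [Finset.sum_Ico_succ_top (Nat.zero_le n)]
  simp only [Finset.Ico_self, Finset.sum_empty, add_zero]
  rw [← Finset.range_eq_Ico]
  refine Finset.sum_congr rfl fun j hj => ?_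
  rw [Finset.mem_range] at hj
  have hfac : ∑ k ∈ Finset.Ico (j + 1) (n + 1), G k j =
      (∑ k ∈ Finset.Ico (j + 1) (n + 1),
        Polynomial.C ((-1 : ℤ) ^ (k - 1) * ((n.choose k : ℤ) * (k.choose j : ℤ)))) * phi j := by
    rw [Finset.sum_mul]
    refine Finset.sum_congr rfl fun k _ => ?_
    show Polynomial.C ((-1 : ℤ) ^ (k - 1) * n.choose k) *
      (Polynomial.C ((k.choose j : ℤ)) * phi j) = _
    rw [← mul_assoc, ← Polynomial.C_mul, mul_assoc]
  rw [hfac, ← map_sum, innerAux n j hj]
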